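/- arXiv:2203.06842 — 3 statements merged into one kernel-verified Lean document; each statement's English description precedes it below -/
import Mathlib

section
/- Let x ∈ 𝔹 with F(x) ≠ 0 be such that ⟪d', F′(x) d'⟫ > 0 for every nonzero d' ∈ E with ⟪x, d'⟫ = 0, and let d be a Newton direction at x. Then ⟪A x^{m-1}, P_x d⟫ = ⟪F(x), d⟫ < 0; in particular d is a curve descent direction of φ at x. -/
open scoped RealInnerProductSpace

noncomputable section

/-- Euclidean space `ℝ^n`. -/
abbrev Euc (n : ℕ) : Type := EuclideanSpace ℝ (Fin n)

/-- An `m`-th order tensor on `ℝ^n`, viewed as a continuous `m`-multilinear form. -/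
abbrev Tensor (m n : ℕ) : Type := ContinuousMultilinearMap ℝ (fun _ : Fin m => Euc n) ℝ

/-- A tensor is symmetric if it is invariant under every permutation of its arguments. -/
def IsSymmTensor {m n : ℕ} (A : Tensor m n) : Prop :=
  ∀ (e : Equiv.Perm (Fin m)) (v : Fin m → Euc n), A (v ∘ e) = A v

/-- `A x^m`, the homogeneous form `A (x, …, x)`. -/
def tpow {m n : ℕ} (A : Tensor m n) (x : Euc n) : ℝ := A (fun _ => x)

/-- The last index of `Fin m`. -/
def lastIdx {m : ℕ} (_hm : 2 ≤ m) : Fin m := ⟨m - 1, by omega⟩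

/-- The second to last index of `Fin m`. -/
def sndIdx {m : ℕ} (_hm : 2 ≤ m) : Fin m := ⟨m - 2, by omega⟩

lemma sndIdx_ne_lastIdx {m : ℕ} (hm : 2 ≤ m) : sndIdx hm ≠ lastIdx hm := by
  simp only [sndIdx, lastIdx, Fin.mk.injEq, ne_eq]
  omega

/-- `A x^{m-1}`: the unique vector with `⟪A x^{m-1}, v⟫ = A (x, …, x, v)` for all `v`. -/
def tvec {m n : ℕ} (A : Tensor m n) (hm : 2 ≤ m) (x : Euc n) : Euc n :=
  (InnerProductSpace.toDual ℝ (Euc n)).symm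
    (A.toContinuousLinearMap (fun _ => x) (lastIdx hm))

/-- `F(x) = A x^{m-1} - (A x^m) • x`. -/
def Fvec {m n : ℕ} (A : Tensor m n) (hm : 2 ≤ m) (x : Euc n) : Euc n :=
  tvec A hm x - tpow A x • x

/-- `φ(x) = (1/m) A x^m`. -/
def phi {m n : ℕ} (A : Tensor m n) (x : Euc n) : ℝ := (1 / (m : ℝ)) * tpow A x

/-- Orthogonal projection `P_x d = d - ⟪x, d⟫ x` (for `x` a unit vector). -/
def Pproj {n : ℕ} (x d : Euc n) : Euc n := d - ⟪x, d⟫ • x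

/-- `x(α) = (x + α d)/‖x + α d‖`, the projection of `x + α d` onto the unit sphere. -/
def xcur {n : ℕ} (x d : Euc n) (α : ℝ) : Euc n := ‖x + α • d‖⁻¹ • (x + α • d)

/-- `w(x, d)`: the unique vector with `⟪w(x, d), v⟫ = A (x, …, x, d, v)` for all `v`. -/
def wvec {m n : ℕ} (A : Tensor m n) (hm : 2 ≤ m) (x d : Euc n) : Euc n :=
  (InnerProductSpace.toDual ℝ (Euc n)).symm
    (A.toContinuousLinearMap (Function.update (fun _ => x) (sndIdx hm) d) (lastIdx hm))

/-- `A (x, …, x, d, d)`. -/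
def A2 {m n : ℕ} (A : Tensor m n) (hm : 2 ≤ m) (x d : Euc n) : ℝ :=
  A (Function.update (Function.update (fun _ => x) (sndIdx hm) d) (lastIdx hm) d)

lemma wvec_add {m n : ℕ} (A : Tensor m n) (hm : 2 ≤ m) (x d₁ d₂ : Euc n) :
    wvec A hm x (d₁ + d₂) = wvec A hm x d₁ + wvec A hm x d₂ := by
  unfold wvec
  rw [← map_add]
  congr 1
  ext v
  simp only [ContinuousMultilinearMap.toContinuousLinearMap_apply, ContinuousLinearMap.add_apply]
  rw [Function.update_comm (sndIdx_ne_lastIdx hm), Function.update_comm (sndIdx_ne_lastIdx hm),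
    Function.update_comm (sndIdx_ne_lastIdx hm)]
  exact A.map_update_add _ _ _ _

lemma wvec_smul {m n : ℕ} (A : Tensor m n) (hm : 2 ≤ m) (x : Euc n) (c : ℝ) (d : Euc n) :
    wvec A hm x (c • d) = c • wvec A hm x d := by
  unfold wvec
  rw [← map_smul]
  congr 1
  ext v
  simp only [ContinuousMultilinearMap.toContinuousLinearMap_apply,
    ContinuousLinearMap.smul_apply, smul_eq_mul]
  rw [Function.update_comm (sndIdx_ne_lastIdx hm), Function.update_comm (sndIdx_ne_lastIdx hm)]
  exact A.map_update_smul _ _ _ _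

/-- The Jacobian `F'(x) d = (m-1) w(x,d) - (A x^m) d - m ⟪A x^{m-1}, d⟫ x`. -/
def FderivL {m n : ℕ} (A : Tensor m n) (hm : 2 ≤ m) (x : Euc n) : Euc n →L[ℝ] Euc n :=
  LinearMap.toContinuousLinearMap
  { toFun := fun d =>
      ((m : ℝ) - 1) • wvec A hm x d - tpow A x • d - ((m : ℝ) * ⟪tvec A hm x, d⟫) • x
    map_add' := by
      intro d₁ d₂
      try simp only
      rw [wvec_add, inner_add_right]
      module
    map_smul' := by
      intro c d
      simp only [RingHom.id_apply]
      rw [wvec_smul, inner_smul_right]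
      module }

/-- A Newton direction at `x`: `⟪x, d⟫ = 0` and `P_x (F'(x) d + F(x)) = 0`. -/
def NewtonDir {m n : ℕ} (A : Tensor m n) (hm : 2 ≤ m) (x d : Euc n) : Prop :=
  ⟪x, d⟫ = 0 ∧ Pproj x (FderivL A hm x d + Fvec A hm x) = 0

/-- The residual function `θ(x) = (1/2)‖F(x)‖²`. -/
def theta {m n : ℕ} (A : Tensor m n) (hm : 2 ≤ m) (x : Euc n) : ℝ :=
  (1 / 2) * ‖Fvec A hm x‖ ^ 2

/-- Assumption (A): second-order sufficient condition at the KKT point `x̄`. -/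
def AssumpA {m n : ℕ} (A : Tensor m n) (hm : 2 ≤ m) (xb : Euc n) (lam : ℝ) : Prop :=
  ‖xb‖ = 1 ∧ tvec A hm xb = lam • xb ∧ lam = tpow A xb ∧
    ∀ d : Euc n, d ≠ 0 → ⟪xb, d⟫ = 0 →
      0 < ((m : ℝ) - 1) * A2 A hm xb d - lam * ‖d‖ ^ 2

end


section Aux

variable {m n : ℕ}

lemma inner_tvec (A : Tensor m n) (hm : 2 ≤ m) (x v : Euc n) :
    ⟪tvec A hm x, v⟫ = A (Function.update (fun _ => x) (lastIdx hm) v) := by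
  unfold tvec
  rw [InnerProductSpace.toDual_symm_apply]
  simp [ContinuousMultilinearMap.toContinuousLinearMap]

lemma update_symm (A : Tensor m n) (hA : IsSymmTensor A) (hm : 2 ≤ m) (x v : Euc n)
    (i : Fin m) :
    A (Function.update (fun _ => x) i v) = ⟪tvec A hm x, v⟫ := by
  rw [inner_tvec]
  have h := hA (Equiv.swap i (lastIdx hm)) (Function.update (fun _ => x) (lastIdx hm) v)
  rw [← h]
  congr 1
  funext j
  simp only [Function.comp_apply]
  rcases eq_or_ne j i with rfl | hj
  · rw [Function.update_self, Equiv.swap_apply_left, Function.update_self]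
  · rw [Function.update_of_ne hj]
    rcases eq_or_ne j (lastIdx hm) with rfl | hj2
    · rw [Equiv.swap_apply_right, Function.update_of_ne (Ne.symm hj)]
    · rw [Equiv.swap_apply_of_ne_of_ne hj hj2, Function.update_of_ne hj2]

lemma inner_x_tvec (A : Tensor m n) (hm : 2 ≤ m) (x : Euc n) :
    ⟪tvec A hm x, x⟫ = tpow A x := by
  rw [inner_tvec]
  congr 1
  exact Function.update_eq_self _ _

lemma tpow_smul (A : Tensor m n) (c : ℝ) (y : Euc n) :
    tpow A (c • y) = c ^ m * tpow A y := by
  unfold tpow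
  have : (fun _ : Fin m => c • y) = fun i : Fin m => c • ((fun _ => y) i) := rfl
  rw [this, A.map_smul_univ]
  simp [Finset.prod_const]

lemma tpow_hasDerivAt (A : Tensor m n) (hA : IsSymmTensor A) (hm : 2 ≤ m) (x d : Euc n) :
    HasDerivAt (fun α : ℝ => tpow A (x + α • d)) ((m : ℝ) * ⟪tvec A hm x, d⟫) 0 := by
  classical
  set L : Euc n →L[ℝ] (Fin m → Euc n) :=
    ContinuousLinearMap.pi (fun _ : Fin m => ContinuousLinearMap.id ℝ (Euc n)) with hL
  have hγ : HasDerivAt (fun α : ℝ => x + α • d) d 0 := by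
    simpa using ((hasDerivAt_id (0:ℝ)).smul_const d).const_add x
  have hfA : HasFDerivAt (fun v : Fin m → Euc n => A v)
      (A.linearDeriv (fun _ => x)) (L x) := by
    have : L x = (fun _ : Fin m => x) := rfl
    rw [this]
    exact A.hasFDerivAt _
  have hLf : HasFDerivAt (fun y : Euc n => A (fun _ : Fin m => y))
      ((A.linearDeriv (fun _ => x)).comp L) x := by
    exact hfA.comp x (L.hasFDerivAt)
  have hx0 : x = x + (0:ℝ) • d := by simp
  rw [hx0] at hLf
  have hcomp := hLf.comp_hasDerivAt 0 hγ
  rw [← hx0] at hcomp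
  have heq : ((A.linearDeriv (fun _ => x)).comp L) d = (m : ℝ) * ⟪tvec A hm x, d⟫ := by
    have : ((A.linearDeriv (fun _ => x)).comp L) d
        = ∑ i : Fin m, A (Function.update (fun _ => x) i d) := by
      simp [ContinuousMultilinearMap.linearDeriv_apply, hL]
    rw [this]
    have : ∀ i : Fin m, A (Function.update (fun _ => x) i d) = ⟪tvec A hm x, d⟫ :=
      fun i => update_symm A hA hm x d i
    rw [Finset.sum_congr rfl (fun i _ => this i)]
    simp [mul_comm]
  rw [heq] at hcomp
  exact hcomp

end Aux

/-- at a non-eigenvector where `F'(x)` is positive definite on `x^⊥`, a Newton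
direction satisfies `⟪A x^{m-1}, P_x d⟫ = ⟪F(x), d⟫ < 0` and is a curve descent direction
of `φ` at `x`. -/
theorem stmt10 {m n : ℕ} (hn : 1 ≤ n) (hm : 2 ≤ m) (A : Tensor m n) (hA : IsSymmTensor A)
    (x : Euc n) (hx : ‖x‖ = 1) (hFx : Fvec A hm x ≠ 0)
    (hpd : ∀ d' : Euc n, d' ≠ 0 → ⟪x, d'⟫ = 0 → 0 < ⟪d', FderivL A hm x d'⟫)
    (d : Euc n) (hNd : NewtonDir A hm x d) :
    ⟪tvec A hm x, Pproj x d⟫ = ⟪Fvec A hm x, d⟫ ∧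
    ⟪Fvec A hm x, d⟫ < 0 ∧
    ∃ αbar > 0, ∀ α ∈ Set.Ioc (0 : ℝ) αbar, phi A (xcur x d α) < phi A x := by
  obtain ⟨hxd, hP⟩ := hNd
  have hdx : ⟪d, x⟫ = 0 := by rw [real_inner_comm]; exact hxd
  have hxx : ⟪x, x⟫ = (1:ℝ) := by
    rw [real_inner_self_eq_norm_sq, hx]; norm_num
  have hxt : ⟪x, tvec A hm x⟫ = tpow A x := by
    rw [real_inner_comm]; exact inner_x_tvec A hm x
  have hxF : ⟪x, Fvec A hm x⟫ = 0 := by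
    unfold Fvec
    rw [inner_sub_right, real_inner_smul_right, hxt, hxx]
    ring
  have hPd : Pproj x d = d := by unfold Pproj; rw [hxd]; simp
  have part1 : ⟪tvec A hm x, Pproj x d⟫ = ⟪Fvec A hm x, d⟫ := by
    rw [hPd]; unfold Fvec
    rw [inner_sub_left, real_inner_smul_left, hxd]; ring
  have hd0 : d ≠ 0 := by
    intro h
    apply hFx
    rw [h] at hP
    simp only [map_zero, zero_add] at hP
    unfold Pproj at hP
    rw [hxF] at hP
    simpa using hP
  have hinnerP : ∀ y : Euc n, ⟪d, Pproj x y⟫ = ⟪d, y⟫ := by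
    intro y; unfold Pproj
    rw [inner_sub_right, real_inner_smul_right, hdx]; ring
  have key : ⟪d, FderivL A hm x d⟫ + ⟪d, Fvec A hm x⟫ = 0 := by
    have h1 := hinnerP (FderivL A hm x d + Fvec A hm x)
    rw [hP, inner_zero_right, inner_add_right] at h1
    linarith
  have part2 : ⟪Fvec A hm x, d⟫ < 0 := by
    rw [real_inner_comm]
    have hpos := hpd d hd0 hxd
    linarith
  refine ⟨part1, part2, ?_⟩
  -- derivative setup
  set p : ℝ := -(m : ℝ)/2 with hp
  set s : ℝ → ℝ := fun α => 1 + α^2 * ‖d‖^2 with hs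
  have hnorm : ∀ α : ℝ, ‖x + α • d‖^2 = s α := by
    intro α
    rw [norm_add_sq_real, real_inner_smul_right, hxd, norm_smul, hx]
    simp only [Real.norm_eq_abs, mul_pow, sq_abs, hs]
    ring
  have hspos : ∀ α : ℝ, 0 < s α := by intro α; simp only [hs]; positivity
  have hnpos : ∀ α : ℝ, 0 < ‖x + α • d‖ := by
    intro α
    have h2 : 0 < ‖x + α • d‖^2 := by rw [hnorm α]; exact hspos α
    nlinarith [norm_nonneg (x + α • d)]
  have hcur : ∀ α : ℝ, phi A (xcur x d α)
      = (1/(m:ℝ)) * ((s α) ^ p * tpow A (x + α • d)) := by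
    intro α
    unfold phi xcur
    rw [tpow_smul]
    have hkey : (‖x + α • d‖⁻¹)^m = (s α) ^ p := by
      rw [← hnorm α, hp, ← Real.rpow_natCast (‖x + α • d‖) 2,
        ← Real.rpow_mul (norm_nonneg _),
        show ((2:ℕ):ℝ) * (-(m:ℝ)/2) = -(m:ℝ) by push_cast; ring,
        Real.rpow_neg (norm_nonneg _), Real.rpow_natCast, inv_pow]
    rw [hkey]
  have hm0 : (m:ℝ) ≠ 0 := Nat.cast_ne_zero.mpr (by omega)
  have hq := tpow_hasDerivAt A hA hm x d
  have hsd : HasDerivAt s 0 0 := by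
    have h1 : HasDerivAt (fun α : ℝ => α^2) (0:ℝ) 0 := by
      simpa using hasDerivAt_pow 2 (0:ℝ)
    simpa [hs] using (h1.mul_const (‖d‖^2)).const_add 1
  have hh : HasDerivAt (fun α => (s α) ^ p) 0 0 := by
    have h0 : s 0 ≠ 0 := ne_of_gt (hspos 0)
    have := hsd.rpow_const (p := p) (Or.inl h0)
    simpa using this
  have hs0 : s 0 = 1 := by simp [hs]
  have hgL : HasDerivAt (fun α : ℝ => phi A (xcur x d α)) (⟪Fvec A hm x, d⟫) 0 := by
    have hgr : HasDerivAt (fun α : ℝ => (1/(m:ℝ)) * ((s α) ^ p * tpow A (x + α • d)))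
        ((1/(m:ℝ)) * (0 * tpow A (x + (0:ℝ) • d) + (s 0) ^ p * ((m:ℝ) * ⟪tvec A hm x, d⟫))) 0 :=
      (hh.mul hq).const_mul _
    have heqf : (fun α : ℝ => phi A (xcur x d α))
        = fun α : ℝ => (1/(m:ℝ)) * ((s α) ^ p * tpow A (x + α • d)) := funext hcur
    rw [heqf]
    convert hgr using 1
    rw [hs0, Real.one_rpow]
    have htd : ⟪Fvec A hm x, d⟫ = ⟪tvec A hm x, d⟫ := by rw [← part1, hPd]
    rw [htd]
    try field_simp
    try ring
  have hslope := hasDerivAt_iff_tendsto_slope.mp hgL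
  have h1 : ∀ᶠ α in nhdsWithin (0:ℝ) {(0:ℝ)}ᶜ,
      slope (fun α => phi A (xcur x d α)) 0 α < 0 :=
    hslope.eventually_lt_const part2
  have hev : ∀ᶠ α in nhdsWithin (0:ℝ) (Set.Ioi 0),
      slope (fun α => phi A (xcur x d α)) 0 α < 0 :=
    h1.filter_mono (nhdsWithin_mono 0 (fun a ha => Set.mem_compl_singleton_iff.mpr
      (ne_of_gt ha)))
  rw [eventually_nhdsWithin_iff, Metric.eventually_nhds_iff] at hev
  obtain ⟨ε, hε, hball⟩ := hev
  refine ⟨ε/2, by linarith, ?_⟩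
  intro α hα
  obtain ⟨hα0, hαε⟩ := hα
  have hαd : dist α 0 < ε := by
    rw [Real.dist_eq, sub_zero, abs_of_pos hα0]; linarith
  have hsl := hball hαd hα0
  rw [slope_def_field] at hsl
  have hf0 : phi A (xcur x d 0) = phi A x := by
    unfold xcur
    simp [hx]
  rw [hf0, sub_zero] at hsl
  have hne : α ≠ 0 := ne_of_gt hα0
  have := mul_neg_of_neg_of_pos hsl hα0
  rw [div_mul_cancel₀ _ hne] at this
  linarith
end

section
/- For every x ∈ 𝔹, ⟪x, F′(x)* F(x)⟫ = (m − 1) ‖F(x)‖², where F′(x)* denotes the adjoint of F′(x). (This is the key identity ⟪x, ∇θ(x)⟫ = (m−1)‖F(x)‖² for the residual function θ(x) = (1/2)‖F(x)‖².) -/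
open scoped RealInnerProductSpace

/-- the key identity `⟪x, F'(x)* F(x)⟫ = (m-1) ‖F(x)‖²` on the unit sphere. -/
theorem stmt15 {m n : ℕ} (hn : 1 ≤ n) (hm : 2 ≤ m) (A : Tensor m n) (hA : IsSymmTensor A)
    (x : Euc n) (hx : ‖x‖ = 1) :
    ⟪x, ContinuousLinearMap.adjoint (FderivL A hm x) (Fvec A hm x)⟫ =
      ((m : ℝ) - 1) * ‖Fvec A hm x‖ ^ 2 := by
  have hinner_tvec : ∀ v : Euc n, ⟪tvec A hm x, v⟫ = A (Function.update (fun _ => x) (lastIdx hm) v) := by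
    intro v
    unfold tvec
    rw [InnerProductSpace.toDual_symm_apply]
    rfl
  have hwx : wvec A hm x x = tvec A hm x := by
    unfold wvec tvec
    congr 2
    exact Function.update_eq_self _ _
  have htx : ⟪tvec A hm x, x⟫ = tpow A x := by
    rw [hinner_tvec]
    unfold tpow
    congr 1
    exact Function.update_eq_self _ _
  rw [ContinuousLinearMap.adjoint_inner_right]
  have hFx : FderivL A hm x x =
      ((m : ℝ) - 1) • tvec A hm x - tpow A x • x - ((m : ℝ) * tpow A x) • x := by
    simp only [FderivL, LinearMap.coe_toContinuousLinearMap', LinearMap.coe_mk, AddHom.coe_mk]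
    rw [hwx, htx]
  rw [hFx]
  have hxx : ⟪x, x⟫ = 1 := by
    rw [real_inner_self_eq_norm_sq, hx]; norm_num
  have hxt : ⟪x, tvec A hm x⟫ = tpow A x := by rw [real_inner_comm]; exact htx
  have hnorm : ‖Fvec A hm x‖ ^ 2 = ⟪tvec A hm x, tvec A hm x⟫ - tpow A x ^ 2 := by
    rw [← real_inner_self_eq_norm_sq]
    unfold Fvec
    simp only [inner_sub_left, inner_sub_right, inner_smul_left, inner_smul_right, conj_trivial,
      htx, hxt, hxx]
    ring
  rw [hnorm]
  unfold Fvec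
  simp only [inner_sub_left, inner_sub_right, inner_smul_left, inner_smul_right, conj_trivial,
    htx, hxt, hxx]
  ring
end

section
/- Let x ∈ 𝔹 and let d ∈ E satisfy P_x(F′(x) d + F(x)) = 0. Then ⟪F′(x)* F(x), d⟫ = −‖F(x)‖², i.e. the directional derivative of θ at x along d equals −‖F(x)‖². -/
open scoped RealInnerProductSpace

/-- for any solution `d` of the (projected) Newton equation at `x`, the
directional derivative of `θ` at `x` along `d` equals `-‖F(x)‖²`. -/
theorem stmt17 {m n : ℕ} (hn : 1 ≤ n) (hm : 2 ≤ m) (A : Tensor m n) (hA : IsSymmTensor A)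
    (x : Euc n) (hx : ‖x‖ = 1) (d : Euc n)
    (hd : Pproj x (FderivL A hm x d + Fvec A hm x) = 0) :
    ⟪ContinuousLinearMap.adjoint (FderivL A hm x) (Fvec A hm x), d⟫ =
      -‖Fvec A hm x‖ ^ 2 := by
  have hFx_x : ⟪Fvec A hm x, x⟫ = 0 := by
    have h1 : ⟪tvec A hm x, x⟫ = tpow A x := by
      rw [tvec, InnerProductSpace.toDual_symm_apply]
      simp only [ContinuousMultilinearMap.toContinuousLinearMap_apply]
      rw [Function.update_eq_self]
      rfl
    rw [Fvec, inner_sub_left, h1, real_inner_smul_left, real_inner_self_eq_norm_sq, hx]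
    ring
  have hd' : FderivL A hm x d + Fvec A hm x
      = ⟪x, FderivL A hm x d + Fvec A hm x⟫ • x := by
    have := hd
    rw [Pproj, sub_eq_zero] at this
    exact this
  have key : ⟪Fvec A hm x, FderivL A hm x d⟫ = -‖Fvec A hm x‖ ^ 2 := by
    have h2 : ⟪Fvec A hm x, FderivL A hm x d + Fvec A hm x⟫ = 0 := by
      rw [hd', real_inner_smul_right, real_inner_comm, hFx_x]
      ring
    rw [inner_add_right, real_inner_self_eq_norm_sq] at h2
    linarith
  rw [ContinuousLinearMap.adjoint_inner_left]
  exact key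
end
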